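/- The closed linear span of the functions x ↦ x^k e^(-x²/2), k ∈ ℕ, is all of L²(ℝ). -/

import Mathlib

open MeasureTheory Real

noncomputable section SpanGaussian

namespace SpanGaussian

open Complex Filter Finset Submodule
open scoped ENNReal Topology

/-- the gaussian -/
def gauss (x : ℝ) : ℂ := (Real.exp (-x ^ 2 / 2) : ℂ)

lemma gauss_norm (x : ℝ) : ‖gauss x‖ = Real.exp (-x ^ 2 / 2) := by
  rw [show gauss x = ((Real.exp (-x ^ 2 / 2) : ℝ) : ℂ) from rfl, Complex.norm_real,
    Real.norm_eq_abs, abs_of_pos (Real.exp_pos _)]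

/-- monomial times gaussian -/
def mono (k : ℕ) (x : ℝ) : ℂ := (x : ℂ) ^ k * gauss x

/-- exp(i t x) times gaussian -/
def expg (t : ℝ) (x : ℝ) : ℂ := Complex.exp ((t : ℂ) * x * Complex.I) * gauss x

lemma continuous_gauss : Continuous gauss := by
  unfold gauss; fun_prop

lemma sq_norm_gauss (x : ℝ) : ‖gauss x‖ ^ 2 = Real.exp (-1 * x ^ 2) := by
  rw [gauss_norm, sq, ← Real.exp_add]; ring_nf

lemma memL2_gauss : MemLp gauss 2 (volume : Measure ℝ) := by
  rw [memLp_two_iff_integrable_sq_norm continuous_gauss.aestronglyMeasurable]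
  simp only [sq_norm_gauss]
  exact integrable_exp_neg_mul_sq one_pos

lemma pow_le_factorial_mul_exp (n : ℕ) {x : ℝ} (hx : 0 ≤ x) :
    x ^ n ≤ n.factorial * Real.exp x := by
  have h1 := Real.sum_le_exp_of_nonneg hx (n + 1)
  have h2 : x ^ n / n.factorial ≤ ∑ i ∈ Finset.range (n + 1), x ^ i / i.factorial :=
    Finset.single_le_sum (f := fun i : ℕ => x ^ i / i.factorial)
      (fun i _ => by positivity) (Finset.self_mem_range_succ n)
  have hf : (0 : ℝ) < n.factorial := by positivity
  have := (div_le_iff₀ hf).mp (h2.trans h1)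
  linarith

lemma continuous_mono (k : ℕ) : Continuous (mono k) := by
  unfold mono gauss; fun_prop

lemma norm_mono (k : ℕ) (x : ℝ) : ‖mono k x‖ = |x| ^ k * Real.exp (-x ^ 2 / 2) := by
  rw [mono, norm_mul, norm_pow, Complex.norm_real, Real.norm_eq_abs, gauss_norm]

lemma memL2_mono (k : ℕ) : MemLp (mono k) 2 (volume : Measure ℝ) := by
  rw [memLp_two_iff_integrable_sq_norm (continuous_mono k).aestronglyMeasurable]
  have hint : Integrable (fun x : ℝ =>
      ((2 * k).factorial * Real.exp (1 / 2)) * Real.exp (-(1 / 2) * x ^ 2)) volume :=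
    (integrable_exp_neg_mul_sq (by norm_num)).const_mul _
  refine hint.mono' ?_ (Filter.Eventually.of_forall fun x => ?_)
  · exact ((continuous_mono k).norm.pow 2).aestronglyMeasurable
  · have h0 : ‖mono k x‖ ^ 2 = |x| ^ (2 * k) * Real.exp (-1 * x ^ 2) := by
      rw [norm_mono, mul_pow, ← pow_mul, sq (Real.exp _), ← Real.exp_add]
      ring_nf
    have h1 : |x| ^ (2 * k) ≤ (2 * k).factorial * Real.exp |x| :=
      pow_le_factorial_mul_exp _ (abs_nonneg x)
    have h2 : Real.exp |x| * Real.exp (-1 * x ^ 2) ≤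
        Real.exp (1 / 2) * Real.exp (-(1 / 2) * x ^ 2) := by
      rw [← Real.exp_add, ← Real.exp_add]
      apply Real.exp_le_exp.2
      nlinarith [sq_nonneg (|x| - 1), _root_.sq_abs x]
    have h3 : (0 : ℝ) ≤ Real.exp (-1 * x ^ 2) := (Real.exp_pos _).le
    have h4 : (0 : ℝ) < ((2 * k).factorial : ℝ) := by positivity
    rw [Real.norm_eq_abs, _root_.abs_of_nonneg (by positivity), h0]
    calc |x| ^ (2 * k) * Real.exp (-1 * x ^ 2)
        ≤ ((2 * k).factorial * Real.exp |x|) * Real.exp (-1 * x ^ 2) := by nlinarith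
      _ = (2 * k).factorial * (Real.exp |x| * Real.exp (-1 * x ^ 2)) := by ring
      _ ≤ (2 * k).factorial * (Real.exp (1 / 2) * Real.exp (-(1 / 2) * x ^ 2)) := by nlinarith
      _ = (2 * k).factorial * Real.exp (1 / 2) * Real.exp (-(1 / 2) * x ^ 2) := by ring

lemma continuous_expg (t : ℝ) : Continuous (expg t) := by
  unfold expg gauss; fun_prop

lemma norm_expg (t : ℝ) (x : ℝ) : ‖expg t x‖ = Real.exp (-x ^ 2 / 2) := by
  rw [expg, norm_mul, gauss_norm, Complex.norm_exp]
  simp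

lemma memL2_expg (t : ℝ) : MemLp (expg t) 2 (volume : Measure ℝ) := by
  refine memL2_gauss.of_le (continuous_expg t).aestronglyMeasurable
    (Filter.Eventually.of_forall fun x => ?_)
  rw [norm_expg, gauss_norm]

/-- dominated convergence for the L² seminorm -/
lemma tendsto_eLpNorm_two {u : ℕ → ℝ → ℂ} {D : ℝ → ℝ}
    (hmeas : ∀ n, AEStronglyMeasurable (u n) (volume : Measure ℝ))
    (hD : Integrable (fun x => D x ^ 2) (volume : Measure ℝ))
    (hbound : ∀ n, ∀ᵐ x : ℝ ∂volume, ‖u n x‖ ≤ D x)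
    (hlim : ∀ᵐ x : ℝ ∂volume, Tendsto (fun n => u n x) atTop (𝓝 0)) :
    Tendsto (fun n => eLpNorm (u n) 2 (volume : Measure ℝ)) atTop (𝓝 0) := by
  have hsqb : ∀ n, ∀ᵐ x : ℝ ∂volume, ‖‖u n x‖ ^ 2‖ ≤ D x ^ 2 := by
    intro n
    filter_upwards [hbound n] with x hx
    rw [Real.norm_eq_abs, _root_.abs_of_nonneg (by positivity)]
    exact pow_le_pow_left₀ (norm_nonneg _) hx 2
  have hInt : ∀ n, Integrable (fun x => ‖u n x‖ ^ 2) volume := fun n =>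
    hD.mono' ((hmeas n).norm.pow 2) (hsqb n)
  have hmem : ∀ n, MemLp (u n) 2 (volume : Measure ℝ) := fun n =>
    (memLp_two_iff_integrable_sq_norm (hmeas n)).2 (hInt n)
  have hI : Tendsto (fun n => ∫ x, ‖u n x‖ ^ 2 ∂volume) atTop (𝓝 0) := by
    have h := tendsto_integral_of_dominated_convergence (F := fun n x => ‖u n x‖ ^ 2)
      (f := fun _ => (0 : ℝ)) (bound := fun x => D x ^ 2)
      (fun n => (hmeas n).norm.pow 2) hD hsqb
      (by filter_upwards [hlim] with x hx
          simpa using (hx.norm.pow 2))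
    simpa using h
  have heq : ∀ n, eLpNorm (u n) 2 (volume : Measure ℝ) =
      ENNReal.ofReal ((∫ x, ‖u n x‖ ^ 2 ∂volume) ^ (2 : ℝ)⁻¹) := by
    intro n
    rw [(hmem n).eLpNorm_eq_integral_rpow_norm two_ne_zero ENNReal.ofNat_ne_top]
    have : ((2 : ℝ≥0∞).toReal) = (2 : ℝ) := by simp
    rw [this]
    congr 1
    refine congrArg (fun r => r ^ (2 : ℝ)⁻¹) (integral_congr_ae ?_)
    filter_upwards with x
    rw [show ((2:ℝ)) = ((2:ℕ):ℝ) by norm_num, Real.rpow_natCast]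
  simp only [heq]
  have : Tendsto (fun n => (∫ x, ‖u n x‖ ^ 2 ∂volume) ^ (2 : ℝ)⁻¹) atTop (𝓝 0) := by
    have h0 : (0 : ℝ) = 0 ^ (2 : ℝ)⁻¹ := by
      rw [Real.zero_rpow (by norm_num)]
    rw [h0]
    exact (Real.continuousAt_rpow_const 0 _ (Or.inr (by norm_num))).tendsto.comp hI
  simpa using (ENNReal.tendsto_ofReal this)

def K : Submodule ℂ (Lp ℂ 2 (volume : Measure ℝ)) :=
  (Submodule.span ℂ
      {f : Lp ℂ 2 (volume : Measure ℝ) |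
        ∃ k : ℕ, ∀ᵐ x : ℝ ∂(volume : Measure ℝ),
          f x = (x ^ k * Real.exp (-x ^ 2 / 2) : ℂ)}).topologicalClosure

lemma mono_mem (k : ℕ) : (memL2_mono k).toLp (mono k) ∈ K := by
  apply Submodule.le_topologicalClosure
  apply Submodule.subset_span
  refine ⟨k, ?_⟩
  filter_upwards [(memL2_mono k).coeFn_toLp] with x hx
  rw [hx]; rfl

lemma coeFn_sum_ae {ι : Type*} (s : Finset ι) (g : ι → Lp ℂ 2 (volume : Measure ℝ)) :
    ⇑(∑ i ∈ s, g i) =ᵐ[(volume : Measure ℝ)] fun x => ∑ i ∈ s, g i x := by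
  classical
  induction s using Finset.induction_on with
  | empty =>
    simp only [Finset.sum_empty]
    exact Lp.coeFn_zero (E := ℂ) (p := 2) (μ := (volume : Measure ℝ))
  | @insert a s' hni ih =>
    rw [Finset.sum_insert hni]
    filter_upwards [Lp.coeFn_add (g a) (∑ i ∈ s', g i), ih] with x h1 h2
    rw [Finset.sum_insert hni, h1, Pi.add_apply, h2]

lemma expg_mem (t : ℝ) : (memL2_expg t).toLp (expg t) ∈ K := by
  classical
  set c : ℕ → ℂ := fun n => ((t : ℂ) * Complex.I) ^ n / n.factorial with hc
  set y : ℕ → Lp ℂ 2 (volume : Measure ℝ) :=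
    fun N => ∑ n ∈ Finset.range N, c n • (memL2_mono n).toLp (mono n) with hy
  have hyK : ∀ N, y N ∈ K := fun N =>
    Submodule.sum_mem K fun n _ => Submodule.smul_mem K _ (mono_mem n)
  -- the pointwise partial sums
  set F : ℕ → ℝ → ℂ := fun N x => ∑ n ∈ Finset.range N, c n * mono n x with hF
  have hyF : ∀ N, ⇑(y N) =ᵐ[(volume : Measure ℝ)] F N := by
    intro N
    have h1 := coeFn_sum_ae (Finset.range N) (fun n => c n • (memL2_mono n).toLp (mono n))
    have h2 : ∀ᵐ x : ℝ ∂volume, ∀ n : ℕ,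
        (c n • (memL2_mono n).toLp (mono n)) x = c n * mono n x := by
      rw [MeasureTheory.ae_all_iff]
      intro n
      filter_upwards [Lp.coeFn_smul (c n) ((memL2_mono n).toLp (mono n)),
        (memL2_mono n).coeFn_toLp] with x hx1 hx2
      rw [hx1]; simp [hx2]
    filter_upwards [h1, h2] with x hx1 hx2
    rw [hx1]; exact Finset.sum_congr rfl fun n _ => hx2 n
  -- convergence of eLpNorm
  have key : Tendsto (fun N => eLpNorm (F N - expg t) 2 (volume : Measure ℝ)) atTop (𝓝 0) := by
    apply tendsto_eLpNorm_two (D := fun x => 2 * Real.exp (|t| * |x|) * Real.exp (-x ^ 2 / 2))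
    · intro N
      exact ((continuous_finset_sum _ fun n _ => continuous_const.mul (continuous_mono n)).sub
        (continuous_expg t)).aestronglyMeasurable
    · -- integrability of the square of the dominating function
      have hint : Integrable (fun x : ℝ =>
          (4 * Real.exp (2 * t ^ 2)) * Real.exp (-(1 / 2) * x ^ 2)) volume :=
        (integrable_exp_neg_mul_sq (by norm_num)).const_mul _
      have hDc : Continuous fun x : ℝ => 2 * Real.exp (|t| * |x|) * Real.exp (-x ^ 2 / 2) := by
        fun_prop
      refine hint.mono' (hDc.pow 2).aestronglyMeasurable
        (Filter.Eventually.of_forall fun x => ?_)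
      have e1 : Real.exp (|t| * |x|) ^ 2 = Real.exp (2 * (|t| * |x|)) := by
        rw [sq, ← Real.exp_add]; congr 1; ring
      have e2 : Real.exp (-x ^ 2 / 2) ^ 2 = Real.exp (-x ^ 2) := by
        rw [sq, ← Real.exp_add]; congr 1; ring
      have h1 : (2 * Real.exp (|t| * |x|) * Real.exp (-x ^ 2 / 2)) ^ 2
          = 4 * (Real.exp (2 * (|t| * |x|)) * Real.exp (-x ^ 2)) := by
        rw [← e1, ← e2]; ring
      have h2 : Real.exp (2 * (|t| * |x|)) * Real.exp (-x ^ 2)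
          ≤ Real.exp (2 * t ^ 2) * Real.exp (-(1 / 2) * x ^ 2) := by
        rw [← Real.exp_add, ← Real.exp_add]
        exact Real.exp_le_exp.2
          (by nlinarith [sq_nonneg (|t| - |x| / 2), _root_.sq_abs t, _root_.sq_abs x])
      rw [Real.norm_eq_abs, _root_.abs_of_nonneg (by positivity), h1]
      nlinarith [h2]
    · -- pointwise bound
      intro N
      refine Filter.Eventually.of_forall fun x => ?_
      have hz : ‖(t : ℂ) * x * Complex.I‖ = |t| * |x| := by
        simp
      have hkey : (F N - expg t) x
          = ((∑ n ∈ Finset.range N, ((t : ℂ) * x * Complex.I) ^ n / n.factorial)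
              - Complex.exp ((t : ℂ) * x * Complex.I)) * gauss x := by
        simp only [Pi.sub_apply, hF, expg, sub_mul, Finset.sum_mul]
        congr 1
        exact Finset.sum_congr rfl fun n _ => by rw [hc, mono]; ring
      rw [hkey, norm_mul, gauss_norm]
      have hS : ‖∑ n ∈ Finset.range N, ((t : ℂ) * x * Complex.I) ^ n / n.factorial‖
          ≤ Real.exp (|t| * |x|) := by
        refine (norm_sum_le _ _).trans ?_
        have heq : ∀ n ∈ Finset.range N, ‖((t : ℂ) * x * Complex.I) ^ n / (n.factorial : ℂ)‖
            = (|t| * |x|) ^ n / n.factorial := by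
          intro n _
          rw [norm_div, norm_pow, hz, Complex.norm_natCast]
        rw [Finset.sum_congr rfl heq]
        exact Real.sum_le_exp_of_nonneg (by positivity) N
      have hE : ‖Complex.exp ((t : ℂ) * x * Complex.I)‖ ≤ Real.exp (|t| * |x|) := by
        have hre : (((t : ℂ) * x * Complex.I).re) = 0 := by simp
        rw [Complex.norm_exp, hre]
        exact Real.exp_le_exp.2 (by positivity)
      have hsub : ‖(∑ n ∈ Finset.range N, ((t : ℂ) * x * Complex.I) ^ n / n.factorial)
          - Complex.exp ((t : ℂ) * x * Complex.I)‖ ≤ 2 * Real.exp (|t| * |x|) := by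
        calc _ ≤ _ := norm_sub_le _ _
          _ ≤ Real.exp (|t| * |x|) + Real.exp (|t| * |x|) := add_le_add hS hE
          _ = 2 * Real.exp (|t| * |x|) := by ring
      exact mul_le_mul_of_nonneg_right hsub (Real.exp_pos _).le
    · -- pointwise convergence
      refine Filter.Eventually.of_forall fun x => ?_
      have hsum : Tendsto (fun N => ∑ n ∈ Finset.range N,
          ((t : ℂ) * x * Complex.I) ^ n / n.factorial) atTop
          (𝓝 (Complex.exp ((t : ℂ) * x * Complex.I))) := by
        rw [Complex.exp_eq_exp_ℂ]
        exact (NormedSpace.expSeries_div_hasSum_exp ((t : ℂ) * x * Complex.I)).tendsto_sum_nat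
      have hkey : ∀ N, (F N - expg t) x
          = ((∑ n ∈ Finset.range N, ((t : ℂ) * x * Complex.I) ^ n / n.factorial)
              - Complex.exp ((t : ℂ) * x * Complex.I)) * gauss x := by
        intro N
        simp only [Pi.sub_apply, hF, expg, sub_mul, Finset.sum_mul]
        congr 1
        exact Finset.sum_congr rfl fun n _ => by rw [hc, mono]; ring
      simp only [hkey]
      have h := (hsum.sub (tendsto_const_nhds (x := Complex.exp ((t : ℂ) * x * Complex.I)))).mul_const (gauss x)
      simpa using h
  -- conclude
  have htend : Tendsto y atTop (𝓝 ((memL2_expg t).toLp (expg t))) := by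
    rw [Lp.tendsto_Lp_iff_tendsto_eLpNorm']
    refine key.congr' ?_
    filter_upwards with N
    exact (eLpNorm_congr_ae ((hyF N).sub (memL2_expg t).coeFn_toLp)).symm
  exact (Submodule.isClosed_topologicalClosure _).mem_of_tendsto htend
    (Filter.Eventually.of_forall hyK)

set_option maxHeartbeats 1000000 in
lemma approx (F : Lp ℂ 2 (volume : Measure ℝ)) {ε : ℝ} (hε : 0 < ε) :
    ∃ y ∈ K, dist F y < ε := by
  classical
  -- Step 1: approximate by a compactly supported continuous function
  obtain ⟨φ, φsupp, hφF, φcont, φmem⟩ :=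
    (Lp.memLp F).exists_hasCompactSupport_eLpNorm_sub_le (p := 2) ENNReal.ofNat_ne_top
      (ε := ENNReal.ofReal (ε / 4)) (by simp [ENNReal.ofReal_eq_zero]; linarith)
  -- Step 2: the function divided by the gaussian
  set ψ : ℝ → ℂ := fun x => φ x * (Real.exp (x ^ 2 / 2) : ℂ) with hψ
  have hψcont : Continuous ψ := by fun_prop
  have hψsupp : HasCompactSupport ψ := φsupp.mul_right
  have hφψ : ∀ x, φ x = ψ x * gauss x := by
    intro x
    have h1 : (Real.exp (x ^ 2 / 2) : ℂ) * (Real.exp (-x ^ 2 / 2) : ℂ) = 1 := by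
      rw [← Complex.ofReal_mul, ← Real.exp_add, show x ^ 2 / 2 + -x ^ 2 / 2 = 0 by ring,
        Real.exp_zero, Complex.ofReal_one]
    rw [hψ]
    show φ x = φ x * _ * gauss x
    rw [mul_assoc, show gauss x = ((Real.exp (-x ^ 2 / 2) : ℝ) : ℂ) from rfl, h1, mul_one]
  obtain ⟨C, hC⟩ := hψcont.bounded_above_of_compact_support hψsupp
  have hC0 : 0 ≤ C := le_trans (norm_nonneg (ψ 0)) (hC 0)
  obtain ⟨A, hA⟩ := hψsupp.isBounded.subset_closedBall 0
  have ψzero : ∀ x : ℝ, A < |x| → ψ x = 0 := by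
    intro x hx
    apply image_eq_zero_of_notMem_tsupport
    intro hmem
    have := hA hmem
    rw [Metric.mem_closedBall, Real.dist_eq, sub_zero] at this
    exact absurd this (not_le.2 hx)
  -- Step 3: tail control
  set tail : ℕ → ℝ≥0∞ := fun R => eLpNorm (fun x : ℝ =>
    Set.indicator {x : ℝ | (R : ℝ) ≤ |x|}
      (fun x => (((2 * C) * Real.exp (-x ^ 2 / 2) : ℝ) : ℂ)) x) 2 (volume : Measure ℝ) with htail
  have tail_tendsto : Tendsto tail atTop (𝓝 0) := by
    apply tendsto_eLpNorm_two (D := fun x => (2 * C) * Real.exp (-x ^ 2 / 2))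
    · intro R
      refine (AEStronglyMeasurable.indicator ?_ ?_)
      · exact (Continuous.aestronglyMeasurable (by fun_prop))
      · exact measurableSet_le measurable_const continuous_abs.measurable
    · have hint : Integrable (fun x : ℝ => (4 * C ^ 2) * Real.exp (-1 * x ^ 2)) volume :=
        (integrable_exp_neg_mul_sq one_pos).const_mul _
      refine hint.congr (Filter.Eventually.of_forall fun x => ?_)
      have e2 : Real.exp (-x ^ 2 / 2) ^ 2 = Real.exp (-1 * x ^ 2) := by
        rw [sq, ← Real.exp_add]; congr 1; ring
      show 4 * C ^ 2 * Real.exp (-1 * x ^ 2) = (2 * C * Real.exp (-x ^ 2 / 2)) ^ 2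
      rw [mul_pow, e2]; ring
    · intro R
      refine Filter.Eventually.of_forall fun x => ?_
      by_cases hx : x ∈ {x : ℝ | (R : ℝ) ≤ |x|}
      · rw [Set.indicator_of_mem hx, Complex.norm_real, Real.norm_eq_abs,
          _root_.abs_of_nonneg (by positivity)]
      · rw [Set.indicator_of_notMem hx]
        simp only [norm_zero]
        positivity
    · refine Filter.Eventually.of_forall fun x => ?_
      have hev : ∀ᶠ R : ℕ in atTop, Set.indicator {x : ℝ | (R : ℝ) ≤ |x|}
          (fun x => (((2 * C) * Real.exp (-x ^ 2 / 2) : ℝ) : ℂ)) x = 0 := by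
        filter_upwards [eventually_gt_atTop ⌊|x|⌋₊] with R hR
        apply Set.indicator_of_notMem
        simp only [Set.mem_setOf_eq, not_le]
        calc |x| < ↑(⌊|x|⌋₊ + 1) := Nat.lt_succ_floor _
          _ ≤ (R : ℝ) := by exact_mod_cast hR
      have hev' : (fun R : ℕ => Set.indicator {x : ℝ | (R : ℝ) ≤ |x|}
          (fun x => (((2 * C) * Real.exp (-x ^ 2 / 2) : ℝ) : ℂ)) x) =ᶠ[atTop]
          fun _ => (0 : ℂ) := hev
      exact Tendsto.congr' hev'.symm tendsto_const_nhds
  -- choose R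
  have hRev : ∀ᶠ R : ℕ in atTop,
      tail R < ENNReal.ofReal (ε / 4) ∧ A < (R : ℝ) ∧ 1 ≤ R := by
    refine (tail_tendsto.eventually (Iio_mem_nhds ?_)).and
      ((tendsto_natCast_atTop_atTop.eventually_gt_atTop A).and (eventually_ge_atTop 1))
    simp [ENNReal.ofReal_pos]; linarith
  obtain ⟨R, htailR, hAR, hR1⟩ := hRev.exists
  have hT : (0 : ℝ) < 2 * (R : ℝ) := by positivity
  haveI : Fact ((0 : ℝ) < 2 * (R : ℝ)) := ⟨hT⟩
  -- Step 4: Stone-Weierstrass on the circle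
  have hψR : ψ (-(R : ℝ)) = ψ (-(R : ℝ) + 2 * (R : ℝ)) := by
    rw [ψzero _ (by rw [abs_neg, Nat.abs_cast]; exact hAR),
      ψzero _ (by rw [show -(R:ℝ) + 2*(R:ℝ) = (R:ℝ) by ring, Nat.abs_cast]; exact hAR)]
  set Φ : C(AddCircle (2 * (R : ℝ)), ℂ) :=
    ⟨AddCircle.liftIco (2 * (R : ℝ)) (-(R : ℝ)) ψ,
      AddCircle.liftIco_continuous hψR hψcont.continuousOn⟩ with hΦ
  have hΦcoe : ∀ x : ℝ, x ∈ Set.Ico (-(R : ℝ)) (-(R : ℝ) + 2 * (R : ℝ)) → Φ ↑x = ψ x :=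
    fun x hx => AddCircle.liftIco_coe_apply (f := ψ) hx
  have hΦbdd : ∀ z, ‖Φ z‖ ≤ C := fun z => hC _
  -- norms
  set Γ' : ℝ≥0∞ := eLpNorm gauss 2 (volume : Measure ℝ) with hΓ'
  have hΓ'top : Γ' ≠ ⊤ := memL2_gauss.2.ne
  set Γ : ℝ := Γ'.toReal with hΓ
  have hΓ0 : 0 ≤ Γ := ENNReal.toReal_nonneg
  set δ : ℝ := (ε / 4) / (Γ + 1) with hδ
  have hδ0 : 0 < δ := by positivity
  -- uniform approximation by a trigonometric polynomial
  have hΦmem : (Φ : C(AddCircle (2 * (R : ℝ)), ℂ)) ∈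
      closure ((Submodule.span ℂ (Set.range (fourier (T := 2 * (R : ℝ))))) :
        Set C(AddCircle (2 * (R : ℝ)), ℂ)) := by
    rw [← Submodule.topologicalClosure_coe, span_fourier_closure_eq_top]
    trivial
  obtain ⟨P, hPmem, hPdist⟩ := Metric.mem_closure_iff.1 hΦmem δ hδ0
  obtain ⟨d, hd⟩ := (Finsupp.mem_span_range_iff_exists_finsupp).1 hPmem
  -- Step 5: the approximating element of K
  set y : Lp ℂ 2 (volume : Measure ℝ) :=
    ∑ n ∈ d.support, d n • (memL2_expg (2 * π * (n : ℝ) / (2 * (R : ℝ)))).toLp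
      (expg (2 * π * (n : ℝ) / (2 * (R : ℝ)))) with hy
  have hyK : y ∈ K := Submodule.sum_mem K fun n _ => Submodule.smul_mem K _ (expg_mem _)
  set q : ℝ → ℂ := fun x => ∑ n ∈ d.support, d n * expg (2 * π * (n : ℝ) / (2 * (R : ℝ))) x with hq
  have hyq : ⇑y =ᵐ[(volume : Measure ℝ)] q := by
    have h1 := coeFn_sum_ae d.support
      (fun n : ℤ => d n • (memL2_expg (2 * π * (n : ℝ) / (2 * (R : ℝ)))).toLp (expg (2 * π * (n : ℝ) / (2 * (R : ℝ)))))
    have h2 : ∀ᵐ x : ℝ ∂volume, ∀ n : ℤ,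
        (d n • (memL2_expg (2 * π * (n : ℝ) / (2 * (R : ℝ)))).toLp (expg (2 * π * (n : ℝ) / (2 * (R : ℝ))))) x
          = d n * expg (2 * π * (n : ℝ) / (2 * (R : ℝ))) x := by
      rw [MeasureTheory.ae_all_iff]
      intro n
      filter_upwards [Lp.coeFn_smul (d n)
        ((memL2_expg (2 * π * (n : ℝ) / (2 * (R : ℝ)))).toLp (expg (2 * π * (n : ℝ) / (2 * (R : ℝ))))),
        (memL2_expg (2 * π * (n : ℝ) / (2 * (R : ℝ)))).coeFn_toLp] with x hx1 hx2
      rw [hx1]; simp [hx2]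
    filter_upwards [h1, h2] with x hx1 hx2
    rw [hx1]; exact Finset.sum_congr rfl fun n _ => hx2 n
  have hqP : ∀ x : ℝ, q x = P ↑x * gauss x := by
    intro x
    rw [← hd]
    rw [Finsupp.sum]
    have : ((∑ n ∈ d.support, d n • fourier n : C(AddCircle (2 * (R : ℝ)), ℂ)) : _ → ℂ) ↑x
        = ∑ n ∈ d.support, d n * fourier n (↑x : AddCircle (2 * (R : ℝ))) := by
      rw [ContinuousMap.coe_sum]
      simp [Finset.sum_apply]
    rw [this, hq, Finset.sum_mul]
    refine Finset.sum_congr rfl fun n _ => ?_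
    rw [expg, fourier_coe_apply]
    have hexp : Complex.exp (((2 * π * (n : ℝ) / (2 * (R : ℝ)) : ℝ) : ℂ) * ↑x * Complex.I)
        = Complex.exp (2 * ↑π * Complex.I * ↑n * ↑x / ((2 * (R : ℝ) : ℝ) : ℂ)) := by
      congr 1
      have hRne : ((R : ℝ) : ℂ) ≠ 0 := by
        have : (R : ℝ) ≠ 0 := by positivity
        exact_mod_cast this
      push_cast
      field_simp
    rw [hexp]
    ring
  -- Step 6: the estimate
  set w2 : ℝ → ℂ := fun x => φ x - Φ ↑x * gauss x with hw2
  set w3 : ℝ → ℂ := fun x => Φ ↑x * gauss x - q x with hw3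
  have hcoe_cont : Continuous fun x : ℝ => Φ (↑x : AddCircle (2 * (R : ℝ))) :=
    Φ.continuous.comp (AddCircle.continuous_mk' _)
  have hw2m : AEStronglyMeasurable w2 (volume : Measure ℝ) :=
    (φcont.sub (hcoe_cont.mul continuous_gauss)).aestronglyMeasurable
  have hw3m : AEStronglyMeasurable w3 (volume : Measure ℝ) := by
    refine ((hcoe_cont.mul continuous_gauss).sub ?_).aestronglyMeasurable
    exact continuous_finset_sum _ fun n _ => continuous_const.mul (continuous_expg _)
  -- bound on w2
  have hw2b : eLpNorm w2 2 (volume : Measure ℝ) ≤ tail R := by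
    refine eLpNorm_mono fun x => ?_
    by_cases hx : x ∈ {x : ℝ | (R : ℝ) ≤ |x|}
    · have hψx : ψ x = 0 := ψzero x (lt_of_lt_of_le hAR hx)
      have hφx : φ x = 0 := by rw [hφψ, hψx, zero_mul]
      rw [Set.indicator_of_mem hx, hw2]
      simp only [hφx, zero_sub, norm_neg]
      rw [norm_mul, gauss_norm, Complex.norm_real, Real.norm_eq_abs,
        _root_.abs_of_nonneg (by positivity : (0:ℝ) ≤ 2 * C * Real.exp (-x ^ 2 / 2))]
      have := hΦbdd (↑x : AddCircle (2 * (R : ℝ)))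
      nlinarith [Real.exp_pos (-x ^ 2 / 2)]
    · simp only [Set.mem_setOf_eq, not_le] at hx
      have hxIco : x ∈ Set.Ico (-(R : ℝ)) (-(R : ℝ) + 2 * (R : ℝ)) := by
        have h1 := abs_lt.1 hx
        exact ⟨by linarith [h1.1], by linarith [h1.2]⟩
      have : w2 x = 0 := by
        rw [hw2]
        simp only
        rw [hΦcoe x hxIco, ← hφψ, sub_self]
      rw [this, Set.indicator_of_notMem (by simpa using not_le.2 hx)]
  -- bound on w3
  have hw3b : eLpNorm w3 2 (volume : Measure ℝ)
      ≤ ENNReal.ofReal δ * Γ' := by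
    have hmono : ∀ x : ℝ, ‖w3 x‖ ≤ ‖((δ : ℂ) • gauss) x‖ := by
      intro x
      rw [hw3]
      simp only [Pi.smul_apply, smul_eq_mul]
      rw [hqP x, ← sub_mul, norm_mul, norm_mul, Complex.norm_real, Real.norm_eq_abs,
        _root_.abs_of_nonneg hδ0.le]
      have h1 : ‖Φ ↑x - P ↑x‖ ≤ δ := by
        have := ContinuousMap.dist_apply_le_dist (f := Φ) (g := P) (↑x : AddCircle (2 * (R : ℝ)))
        rw [dist_eq_norm] at this
        exact this.trans hPdist.le
      exact mul_le_mul_of_nonneg_right h1 (norm_nonneg _)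
    calc eLpNorm w3 2 (volume : Measure ℝ) ≤ eLpNorm ((δ : ℂ) • gauss) 2 volume :=
          eLpNorm_mono hmono
      _ = ‖(δ : ℂ)‖₊ • eLpNorm gauss 2 volume := eLpNorm_const_smul _ _ _ _
      _ = ENNReal.ofReal δ * Γ' := by
          rw [ENNReal.smul_def, smul_eq_mul]
          congr 1
          rw [← ENNReal.ofReal_coe_nnreal, coe_nnnorm, Complex.norm_real, Real.norm_eq_abs,
            _root_.abs_of_nonneg hδ0.le]
  -- assemble
  refine ⟨y, hyK, ?_⟩
  rw [Lp.dist_def]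
  have hsub : (⇑F - ⇑y) =ᵐ[(volume : Measure ℝ)] (⇑F - φ) + (w2 + w3) := by
    filter_upwards [hyq] with x h2
    simp only [Pi.sub_apply, Pi.add_apply, hw2, hw3]
    rw [h2]
    ring
  have hδΓ : ENNReal.ofReal δ * Γ' ≤ ENNReal.ofReal (ε / 4) := by
    have hΓeq : Γ' = ENNReal.ofReal Γ := (ENNReal.ofReal_toReal hΓ'top).symm
    rw [hΓeq, ← ENNReal.ofReal_mul hδ0.le]
    apply ENNReal.ofReal_le_ofReal
    rw [hδ, div_mul_eq_mul_div, div_le_iff₀ (by positivity : (0:ℝ) < Γ + 1)]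
    nlinarith
  have hb : eLpNorm (⇑F - ⇑y) 2 (volume : Measure ℝ)
      ≤ ENNReal.ofReal (ε / 4) + (ENNReal.ofReal (ε / 4) + ENNReal.ofReal (ε / 4)) := by
    rw [eLpNorm_congr_ae hsub]
    refine (eLpNorm_add_le ((Lp.aestronglyMeasurable F).sub φcont.aestronglyMeasurable)
      (hw2m.add hw3m) one_le_two).trans ?_
    refine add_le_add hφF ?_
    refine (eLpNorm_add_le hw2m hw3m one_le_two).trans ?_
    exact add_le_add (hw2b.trans htailR.le) (hw3b.trans hδΓ)
  have hb' : eLpNorm (⇑F - ⇑y) 2 (volume : Measure ℝ) ≤ ENNReal.ofReal (3 * (ε / 4)) := by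
    refine hb.trans ?_
    rw [← ENNReal.ofReal_add (by positivity) (by positivity),
      ← ENNReal.ofReal_add (by positivity) (by positivity)]
    apply ENNReal.ofReal_le_ofReal
    ring_nf
    exact le_refl _
  have := ENNReal.toReal_mono ENNReal.ofReal_ne_top hb'
  rw [ENNReal.toReal_ofReal (by positivity)] at this
  calc (eLpNorm (⇑F - ⇑y) 2 (volume : Measure ℝ)).toReal ≤ 3 * (ε / 4) := this
    _ < ε := by linarith

set_option maxHeartbeats 1000000 in
theorem main :
    (Submodule.span ℂ
        {f : Lp ℂ 2 (volume : Measure ℝ) |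
          ∃ k : ℕ, ∀ᵐ x : ℝ ∂(volume : Measure ℝ),
            f x = (x ^ k * Real.exp (-x ^ 2 / 2) : ℂ)}).topologicalClosure = ⊤ := by
  rw [Submodule.eq_top_iff']
  intro F
  have h : F ∈ closure (K : Set (Lp ℂ 2 (volume : Measure ℝ))) := by
    rw [Metric.mem_closure_iff]
    intro ε hε
    obtain ⟨y, hyK, hy⟩ := approx F hε
    exact ⟨y, hyK, hy⟩
  have hcl : IsClosed (K : Set (Lp ℂ 2 (volume : Measure ℝ))) :=
    Submodule.isClosed_topologicalClosure _
  rw [hcl.closure_eq] at h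
  exact h

end SpanGaussian

end SpanGaussian

/-- The closed linear span of the functions `x ↦ x^k e^(-x²/2)`, `k ∈ ℕ`,
is all of `L²(ℝ)` (totality of the Hermite functions). -/
theorem span_pow_mul_gaussian_dense :
    (Submodule.span ℂ
        {f : Lp ℂ 2 (volume : Measure ℝ) |
          ∃ k : ℕ, ∀ᵐ x : ℝ ∂(volume : Measure ℝ),
            f x = (x ^ k * Real.exp (-x ^ 2 / 2) : ℂ)}).topologicalClosure = ⊤ := by
  exact SpanGaussian.main
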